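/- arXiv:0803.2477 — 8 statements merged into one kernel-verified Lean document; each statement's English description precedes it below -/
import Mathlib

section
/- Let K be a field of characteristic zero with a derivation D, and let F be a differential subfield of K. Let u₁, …, u_L ∈ K be nonzero elements each algebraic over F, let E = F(u₁, …, u_L) be the subfield of K generated by F and the u_i, and assume n = [E : F] is finite. Let v₁, …, v_M ∈ K be nonzero elements such that (D v_j)/v_j ∈ E for every j ∈ {1, …, M}, and set y = v₁ + ⋯ + v_M. Then for every strictly increasing sequence m₁ < m₂ < ⋯ < m_N of nonnegative integers with N ≥ n·M + 1, there exist r₁, …, r_N ∈ F, not all zero, such that Σ_{k=1}^{N} r_k · D^{m_k} y = 0. -/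
open Polynomial

set_option maxHeartbeats 2000000 in
set_option synthInstance.maxHeartbeats 1000000 in
/-- Existence of a joint differential resolvent (Theorem 3.1, honest core). -/
theorem joint_differential_resolvent_exists
    {K : Type*} [Field K] [CharZero K] (D : K → K)
    (hadd : ∀ a b : K, D (a + b) = D a + D b)
    (hleib : ∀ a b : K, D (a * b) = a * D b + D a * b)
    (F : Subfield K) (hF : ∀ a ∈ F, D a ∈ F)
    {L M : ℕ} (u : Fin L → K) (hu : ∀ i, u i ≠ 0)
    (halg : ∀ i, IsAlgebraic F (u i))
    (E : IntermediateField F K) (hE : E = IntermediateField.adjoin F (Set.range u))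
    (n : ℕ) (hfd : FiniteDimensional F E) (hn : n = Module.finrank F E)
    (v : Fin M → K) (hv : ∀ j, v j ≠ 0)
    (hlog : ∀ j, D (v j) / v j ∈ E)
    (y : K) (hy : y = ∑ j, v j)
    (N : ℕ) (hN : N ≥ n * M + 1)
    (m : Fin N → ℕ) (hm : StrictMono m) :
    ∃ r : Fin N → K, (∀ k, r k ∈ F) ∧ (∃ k, r k ≠ 0) ∧
      ∑ k, r k * (D^[m k] y) = 0 := by
  classical
  -- Basic facts about D
  have hD1 : D 1 = 0 := by
    have h := hleib 1 1
    rw [one_mul, one_mul, mul_one] at h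
    rwa [left_eq_add] at h
  have hD0 : D 0 = 0 := by
    have h := hadd 0 0
    rw [add_zero] at h
    rwa [left_eq_add] at h
  -- Package D as a derivation over ℤ
  let d : Derivation ℤ K K :=
    { __ := (AddMonoidHom.mk' D hadd).toIntLinearMap
      map_one_eq_zero' := hD1
      leibniz' := fun a b => by
        simpa [smul_eq_mul, mul_comm] using hleib a b }
  have hdD : ∀ a : K, d a = D a := fun _ => rfl
  -- F-coefficients land in E
  have hmemF : ∀ a : F, D (a : K) ∈ E := by
    intro a
    have h1 : D (a : K) ∈ F := hF a a.2
    exact E.algebraMap_mem (⟨D (a : K), h1⟩ : F)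
  -- key: derivative of a polynomial expression
  have key : ∀ (x : K), x ∈ E → ∀ q : Polynomial F,
      ∃ c ∈ E, D (aeval x q) = c + aeval x (derivative q) * D x := by
    intro x hx q
    induction q using Polynomial.induction_on' with
    | add p q hp hq =>
      obtain ⟨c1, hc1, h1⟩ := hp
      obtain ⟨c2, hc2, h2⟩ := hq
      refine ⟨c1 + c2, add_mem hc1 hc2, ?_⟩
      rw [map_add, hadd, h1, h2, map_add, map_add]
      ring
    | monomial i a =>
      refine ⟨D ((a : K)) * x ^ i, mul_mem (hmemF a) (pow_mem hx i), ?_⟩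
      have hxp : D (x ^ i) = (i : K) * x ^ (i - 1) * D x := by
        have h := d.leibniz_pow (a := x) i
        rw [hdD, hdD] at h
        rw [h, nsmul_eq_mul, smul_eq_mul]
        ring
      have hcoe : (algebraMap F K) a = (a : K) := rfl
      rw [aeval_monomial, derivative_monomial, aeval_monomial, hleib, hxp,
        map_mul, map_natCast, hcoe]
      ring
  -- polynomial values at points of E lie in E
  have haevmem : ∀ (x : K), x ∈ E → ∀ q : Polynomial F, aeval x q ∈ E := by
    intro x hx q
    have h2 := Polynomial.aeval_algHom_apply E.val (⟨x, hx⟩ : E) q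
    rw [show E.val ⟨x, hx⟩ = x from rfl] at h2
    rw [h2]
    exact SetLike.coe_mem _
  have hFchar : CharZero F :=
    ⟨fun a b h => by
      have : ((a : F) : K) = ((b : F) : K) := by exact_mod_cast h
      exact_mod_cast this⟩
  -- E is a differential subfield
  have hDE : ∀ x ∈ E, D x ∈ E := by
    intro x hx
    have hint : IsIntegral F x := by
      have h1 : IsIntegral F (⟨x, hx⟩ : E) := IsIntegral.of_finite F _
      exact h1.map E.val
    have hp0 : minpoly F x ≠ 0 := minpoly.ne_zero hint
    have hd0 : derivative (minpoly F x) ≠ 0 := by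
      intro h
      have h1 := Polynomial.natDegree_eq_zero_of_derivative_eq_zero h
      have h2 := minpoly.natDegree_pos hint
      omega
    have haev : aeval x (derivative (minpoly F x)) ≠ 0 := by
      intro h
      have hle := minpoly.degree_le_of_ne_zero F x hd0 h
      exact absurd hle (not_le.mpr (Polynomial.degree_derivative_lt hp0))
    obtain ⟨c, hc, hcd⟩ := key x hx (minpoly F x)
    rw [minpoly.aeval, hD0] at hcd
    have hx' : D x = -c / aeval x (derivative (minpoly F x)) := by
      field_simp
      linear_combination -hcd
    rw [hx']
    exact div_mem (neg_mem hc) (haevmem x hx _)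
  -- the "weights" D^[k] v_j / v_j lie in E
  have hw : ∀ (j : Fin M) (k : ℕ), D^[k] (v j) / v j ∈ E := by
    intro j k
    induction k with
    | zero => simpa [div_self (hv j)] using E.one_mem
    | succ k ih =>
      have hvk : D^[k] (v j) = (D^[k] (v j) / v j) * v j :=
        (div_mul_cancel₀ _ (hv j)).symm
      have hrec : D^[k + 1] (v j) / v j
          = (D^[k] (v j) / v j) * (D (v j) / v j) + D (D^[k] (v j) / v j) := by
        rw [Function.iterate_succ_apply']
        calc D (D^[k] (v j)) / v j
            = D ((D^[k] (v j) / v j) * v j) / v j := by rw [← hvk]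
          _ = ((D^[k] (v j) / v j) * D (v j) + D (D^[k] (v j) / v j) * v j) / v j := by
              rw [hleib]
          _ = _ := by
              rw [add_div, mul_div_assoc, mul_div_cancel_right₀ _ (hv j)]
      rw [hrec]
      exact add_mem (mul_mem ih (hlog j)) (hDE _ ih)
  -- linear dependence of the weight vectors over F
  let W : Fin N → (Fin M → E) := fun k j => ⟨D^[m k] (v j) / v j, hw j (m k)⟩
  have hnotli : ¬ LinearIndependent F W := by
    intro hli
    have hcard := hli.fintype_card_le_finrank
    have hrank : Module.finrank F (Fin M → E) = n * M := by
      rw [Module.finrank_pi_fintype, hn]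
      simp [Finset.sum_const, Finset.card_univ, mul_comm]
    rw [Fintype.card_fin, hrank] at hcard
    exact Nat.not_succ_le_self (n * M) (le_trans hN hcard)
  obtain ⟨g, hgsum, k0, hk0⟩ := Fintype.not_linearIndependent_iff.mp hnotli
  -- iterated derivative is additive over the finite sum
  have hDadd : ∀ (t : ℕ) (a b : K), D^[t] (a + b) = D^[t] a + D^[t] b := by
    intro t
    induction t with
    | zero => intro a b; simp
    | succ t ih =>
      intro a b
      rw [Function.iterate_succ_apply', Function.iterate_succ_apply',
        Function.iterate_succ_apply', ih, hadd]
  have hDsum : ∀ t : ℕ, D^[t] (∑ j, v j) = ∑ j, D^[t] (v j) := fun t =>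
    map_sum (AddMonoidHom.mk' (D^[t]) (hDadd t)) _ _
  have hterm : ∀ k : Fin N, D^[m k] y = ∑ j, (W k j : K) * v j := by
    intro k
    rw [hy, hDsum]
    exact Finset.sum_congr rfl fun j _ => (div_mul_cancel₀ _ (hv j)).symm
  -- the coefficient relations, coordinatewise in K
  have hrel : ∀ j : Fin M, ∑ k, (g k : K) * (W k j : K) = 0 := by
    intro j
    have h1 : ∑ k, g k • W k j = 0 := by
      have := congrFun hgsum j
      simpa [Finset.sum_apply] using this
    have h2 : ((∑ k, g k • W k j : E) : K) = 0 := by rw [h1]; rfl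
    rw [← h2]
    push_cast
    rfl
  refine ⟨fun k => (g k : K), fun k => (g k).2, ⟨k0, by simpa using hk0⟩, ?_⟩
  calc ∑ k, (g k : K) * D^[m k] y
      = ∑ k, ∑ j, (g k : K) * ((W k j : K) * v j) := by
        refine Finset.sum_congr rfl fun k _ => ?_
        rw [hterm k, Finset.mul_sum]
    _ = ∑ j, (∑ k, (g k : K) * (W k j : K)) * v j := by
        rw [Finset.sum_comm]
        refine Finset.sum_congr rfl fun j _ => ?_
        rw [Finset.sum_mul]
        exact Finset.sum_congr rfl fun k _ => by ring
    _ = 0 := by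
        refine Finset.sum_eq_zero fun j _ => ?_
        rw [hrel j, zero_mul]
end

section
/- Let K be a field of characteristic zero with a derivation D, and let F be a differential subfield of K. Let u ∈ K be a nonzero element algebraic over F with n = [F(u) : F] finite. Let c ∈ K be a constant (D c = 0), and let v ∈ K be a nonzero element with D v = c · ((D u)/u) · v. Then there exist r₀, r₁, …, r_n in the subfield F(c) of K generated by F and c, not all zero, such that Σ_{k=0}^{n} r_k · D^k v = 0. -/
set_option maxHeartbeats 1000000
set_option linter.unusedSectionVars false

section Basics
variable {K : Type*} [Field K] (D : K → K)
  (hadd : ∀ a b : K, D (a + b) = D a + D b)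
  (hleib : ∀ a b : K, D (a * b) = a * D b + D a * b)

include hadd in
lemma D_zero' : D 0 = 0 := by
  have := hadd 0 0; simp at this; exact this

include hleib in
lemma D_one' : D 1 = 0 := by
  have := hleib 1 1; simp at this; linear_combination this

include hadd in
lemma D_neg' (a : K) : D (-a) = - D a := by
  have h0 : D 0 = 0 := D_zero' D hadd
  have := hadd a (-a); simp [h0] at this; linear_combination -this

include hadd hleib in
lemma D_pow' (a : K) : ∀ m : ℕ, D (a ^ m) = m * a ^ (m - 1) * D a
  | 0 => by simp [D_one' D hleib]
  | 1 => by simp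
  | (m+2) => by
      have ih := D_pow' a (m+1)
      rw [pow_succ, hleib, ih]
      push_cast
      ring

include hadd hleib in
lemma D_inv' (a : K) : D a⁻¹ = - D a / a ^ 2 := by
  rcases eq_or_ne a 0 with rfl | ha
  · simp [D_zero' D hadd]
  · have h1 : a * a⁻¹ = 1 := mul_inv_cancel₀ ha
    have := hleib a a⁻¹
    rw [h1, D_one' D hleib] at this
    rw [eq_div_iff (pow_ne_zero 2 ha)]
    linear_combination (-a : K) * this + (-(D a)) * h1

include hadd hleib in
lemma D_eval' (u : K) (p : Polynomial K) :
    D (p.eval u) = (Polynomial.derivative p).eval u * D u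
      + p.sum (fun i a => D a * u ^ i) := by
  induction p using Polynomial.induction_on' with
  | add p q hp hq =>
    rw [Polynomial.eval_add, hadd, hp, hq, map_add, Polynomial.eval_add,
      Polynomial.sum_add_index]
    · ring
    · intro i; simp [D_zero' D hadd]
    · intro i b1 b2; rw [hadd]; ring
  | monomial m a =>
    rw [Polynomial.eval_monomial, hleib, D_pow' D hadd hleib,
      Polynomial.derivative_monomial, Polynomial.eval_monomial,
      Polynomial.sum_monomial_index]
    · ring
    · simp [D_zero' D hadd]
end Basics

section Alg
variable {K : Type*} [Field K] [CharZero K] (D : K → K)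
  (hadd : ∀ a b : K, D (a + b) = D a + D b)
  (hleib : ∀ a b : K, D (a * b) = a * D b + D a * b)
  (F : Subfield K) (hF : ∀ a ∈ F, D a ∈ F)

lemma mem_adjoin_of_mem_F {x : K} (hx : x ∈ F) (s : Set K) :
    x ∈ IntermediateField.adjoin F s := by
  have : algebraMap F K ⟨x, hx⟩ = x := rfl
  exact this ▸ IntermediateField.algebraMap_mem _ _

lemma aeval_mem_adjoin (u : K) (q : Polynomial F) :
    Polynomial.aeval u q ∈ IntermediateField.adjoin F ({u} : Set K) := by
  apply IntermediateField.algebra_adjoin_le_adjoin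
  rw [Algebra.adjoin_singleton_eq_range_aeval]
  exact ⟨q, rfl⟩

include hadd hleib hF in
lemma Du_mem (u : K) (halg : IsAlgebraic F u) :
    D u ∈ IntermediateField.adjoin F ({u} : Set K) := by
  haveI : CharZero F := inferInstance
  have hi : IsIntegral F u := halg.isIntegral
  set m := minpoly F u with hm
  have hm0 : m ≠ 0 := minpoly.ne_zero hi
  set p := m.map (algebraMap F K) with hp
  have hev : p.eval u = 0 := by
    rw [hp, Polynomial.eval_map, ← Polynomial.aeval_def, minpoly.aeval]
  have key := D_eval' D hadd hleib u p
  rw [hev, D_zero' D hadd] at key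
  -- derivative eval nonzero
  have hderm : Polynomial.derivative m ≠ 0 := by
    intro h
    have h1 : m.natDegree = 0 := Polynomial.natDegree_eq_zero_of_derivative_eq_zero h
    have h2 : 0 < m.natDegree := minpoly.natDegree_pos hi
    omega
  have hderev : (Polynomial.derivative p).eval u ≠ 0 := by
    rw [hp, Polynomial.derivative_map, Polynomial.eval_map, ← Polynomial.aeval_def]
    intro h
    have hdvd : m ∣ Polynomial.derivative m := minpoly.dvd F u h
    have h1 := Polynomial.degree_le_of_dvd hdvd hderm
    have h2 := Polynomial.degree_derivative_lt hm0
    exact absurd (lt_of_le_of_lt h1 h2) (lt_irrefl _)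
  have hB : p.sum (fun i a => D a * u ^ i) ∈ IntermediateField.adjoin F ({u} : Set K) := by
    rw [Polynomial.sum]
    apply sum_mem
    intro i hi2
    apply mul_mem
    · apply mem_adjoin_of_mem_F
      apply hF
      rw [hp, Polynomial.coeff_map]
      exact (m.coeff i).2
    · exact pow_mem (IntermediateField.mem_adjoin_simple_self F u) i
  have hA : (Polynomial.derivative p).eval u ∈ IntermediateField.adjoin F ({u} : Set K) := by
    rw [hp, Polynomial.derivative_map, Polynomial.eval_map, ← Polynomial.aeval_def]
    exact aeval_mem_adjoin F u _
  have hDu : D u = - (p.sum fun i a => D a * u ^ i) / ((Polynomial.derivative p).eval u) := by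
    field_simp
    linear_combination -key
  rw [hDu]
  exact div_mem (neg_mem hB) hA

include hadd hleib hF in
lemma D_stable (u c : K) (halg : IsAlgebraic F u) (hc : D c = 0)
    {x : K} (hx : x ∈ IntermediateField.adjoin F ({c, u} : Set K)) :
    D x ∈ IntermediateField.adjoin F ({c, u} : Set K) := by
  induction hx using IntermediateField.adjoin_induction with
  | mem x hx =>
    rcases hx with rfl | rfl
    · rw [hc]; exact zero_mem _
    · exact IntermediateField.adjoin.mono F _ _ (Set.singleton_subset_iff.mpr (by simp))
        (Du_mem D hadd hleib F hF x halg)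
  | algebraMap x =>
    exact mem_adjoin_of_mem_F F (hF _ x.2) _
  | add x y hx hy ihx ihy => rw [hadd]; exact add_mem ihx ihy
  | inv x hx ihx =>
    rw [D_inv' D hadd hleib]
    exact div_mem (neg_mem ihx) (pow_mem hx 2)
  | mul x y hx hy ihx ihy =>
    rw [hleib]
    exact add_mem (mul_mem hx ihy) (mul_mem ihx hy)
end Alg


set_option synthInstance.maxHeartbeats 1000000 in
/-- Existence of a single-polynomial α-resolvent: `v` plays the role of `u^c`
for a constant `c`, and a nontrivial relation `Σ_{k=0}^{n} r_k · D^k v = 0` exists with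
coefficients in `F(c)`, where `n = [F(u) : F]`. -/
theorem alpha_resolvent_exists
    {K : Type*} [Field K] [CharZero K] (D : K → K)
    (hadd : ∀ a b : K, D (a + b) = D a + D b)
    (hleib : ∀ a b : K, D (a * b) = a * D b + D a * b)
    (F : Subfield K) (hF : ∀ a ∈ F, D a ∈ F)
    (u : K) (hu : u ≠ 0) (halg : IsAlgebraic F u)
    (n : ℕ) (hn : n = Module.finrank F (IntermediateField.adjoin F ({u} : Set K)))
    (c : K) (hc : D c = 0)
    (v : K) (hv : v ≠ 0) (hDv : D v = c * (D u / u) * v) :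
    ∃ r : Fin (n + 1) → K,
      (∀ k, r k ∈ IntermediateField.adjoin F ({c} : Set K)) ∧
      (∃ k, r k ≠ 0) ∧
      ∑ k : Fin (n + 1), r k * (D^[(k : ℕ)] v) = 0 := by
  have hi : IsIntegral F u := halg.isIntegral
  set Fc := IntermediateField.adjoin F ({c} : Set K) with hFc
  have hiFc : IsIntegral Fc u := hi.tower_top
  set E := IntermediateField.adjoin Fc ({u} : Set K) with hE
  haveI : FiniteDimensional Fc E := IntermediateField.adjoin.finiteDimensional hiFc
  -- membership transfer
  have memE : ∀ x : K, x ∈ IntermediateField.adjoin F ({c, u} : Set K) → x ∈ E := by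
    intro x hx
    have h2 : ({c, u} : Set K) = {c} ∪ {u} := by rw [Set.singleton_union]
    rw [h2, ← IntermediateField.adjoin_adjoin_left F {c} {u}] at hx
    exact hx
  -- finrank bound
  have hrank : Module.finrank Fc E ≤ n := by
    rw [hE, IntermediateField.adjoin.finrank hiFc, hn,
      IntermediateField.adjoin.finrank hi]
    have hne : (minpoly F u).map (algebraMap F Fc) ≠ 0 :=
      Polynomial.map_ne_zero (minpoly.ne_zero hi)
    have hev : Polynomial.aeval u ((minpoly F u).map (algebraMap F Fc)) = 0 := by
      rw [Polynomial.aeval_map_algebraMap, minpoly.aeval]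
    have := minpoly.degree_le_of_ne_zero Fc u hne hev
    have hnd := Polynomial.natDegree_le_natDegree this
    rwa [Polynomial.natDegree_map] at hnd
  -- the w family
  set w : ℕ → K := fun k => D^[k] v / v with hw
  have hwv : ∀ k, D^[k] v = w k * v := by
    intro k; rw [hw]; field_simp
  have hwmem : ∀ k, w k ∈ E := by
    intro k
    induction k with
    | zero =>
      have : w 0 = 1 := by rw [hw]; simp [div_self hv]
      rw [this]; exact one_mem _
    | succ k ih =>
      have hstep : w (k + 1) = D (w k) + (c * (D u / u)) * w k := by
        have h1 : D^[k+1] v = D (D^[k] v) := Function.iterate_succ_apply' D k v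
        have h2 : D (w k * v) = w k * D v + D (w k) * v := hleib (w k) v
        rw [hw]
        simp only []
        rw [h1, hwv k, h2, hDv]
        field_simp
        ring
      rw [hstep]
      have hcE : c ∈ E := by
        apply memE
        exact IntermediateField.subset_adjoin _ _ (by simp)
      have huE : u ∈ E := by
        apply memE
        exact IntermediateField.subset_adjoin _ _ (by simp)
      have hDuE : D u ∈ E := by
        apply memE
        exact IntermediateField.adjoin.mono F _ _
          (Set.singleton_subset_iff.mpr (by simp))
          (Du_mem D hadd hleib F hF u halg)
      have hDwk : D (w k) ∈ E := by
        apply memE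
        apply D_stable D hadd hleib F hF u c halg hc
        have := ih
        -- transfer back: w k ∈ E → w k ∈ adjoin F {c,u}
        have h2 : ({c, u} : Set K) = {c} ∪ {u} := by rw [Set.singleton_union]
        rw [h2, ← IntermediateField.adjoin_adjoin_left F {c} {u}]
        exact this
      exact add_mem hDwk (mul_mem (mul_mem hcE (div_mem hDuE huE)) ih)
  set wE : Fin (n + 1) → E := fun k => ⟨w k, hwmem k⟩ with hwE
  have hli : ¬ LinearIndependent Fc wE := by
    intro h
    have := h.fintype_card_le_finrank
    simp at this
    omega
  obtain ⟨g, hg0, i, hgi⟩ := Fintype.not_linearIndependent_iff.mp hli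
  refine ⟨fun k => ((g k : Fc) : K), fun k => SetLike.coe_mem _, ⟨i, ?_⟩, ?_⟩
  · simpa using hgi
  · have hsum : ∑ k : Fin (n+1), ((g k : Fc) : K) * w k = 0 := by
      have := congrArg (E.val) hg0
      rw [map_sum] at this
      simp only [IntermediateField.coe_val, map_zero] at this
      rw [← this]
      apply Finset.sum_congr rfl
      intro k _
      rfl
    calc ∑ k : Fin (n+1), ((g k : Fc) : K) * D^[(k:ℕ)] v
        = ∑ k : Fin (n+1), (((g k : Fc) : K) * w k) * v := by
          apply Finset.sum_congr rfl; intro k _; rw [hwv]; ring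
      _ = (∑ k : Fin (n+1), ((g k : Fc) : K) * w k) * v := by rw [Finset.sum_mul]
      _ = 0 := by rw [hsum, zero_mul]
end

section
/- Let K be a field of characteristic zero with a derivation D, and let C = {c ∈ K : D c = 0} be its field of constants. Let u₁, …, u_n ∈ K be linearly independent over C. Suppose h₀, h₁, …, h_n ∈ K are not all zero, g₀, g₁, …, g_n ∈ K, and for every i ∈ {1, …, n} both Σ_{k=0}^{n} h_k · D^k u_i = 0 and Σ_{k=0}^{n} g_k · D^k u_i = 0. Then there exists Θ ∈ K such that g_k = Θ · h_k for every k ∈ {0, 1, …, n}. -/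
open Finset

open scoped Classical in
/-- Key Wronskian-type lemma: a nonzero relation among the iterated derivatives with small
support yields a relation with constant coefficients. -/
lemma wronskian_key {K : Type*} [Field K] (D : K → K)
    (hadd : ∀ a b : K, D (a + b) = D a + D b)
    (hleib : ∀ a b : K, D (a * b) = a * D b + D a * b)
    {ι : Type*} [Fintype ι] [DecidableEq ι] (u : ι → K) :
    ∀ (m : ℕ) (c : ι → K), c ≠ 0 →
      (Finset.univ.filter (fun i => c i ≠ 0)).card ≤ m →
      (∀ k < m, ∑ i, c i * D^[k] (u i) = 0) →
      ∃ d : ι → K, d ≠ 0 ∧ (∀ i, D (d i) = 0) ∧ ∑ i, d i * u i = 0 := by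
  have hD0 : D 0 = 0 := by
    have := hadd 0 0
    simp only [add_zero] at this
    exact left_eq_add.mp this
  have hD1 : D 1 = 0 := by
    have := hleib 1 1
    simp only [one_mul, mul_one] at this
    exact left_eq_add.mp this
  intro m
  induction m with
  | zero =>
    intro c hc hcard _
    exfalso
    apply hc
    funext i
    by_contra hi
    have hmem : i ∈ Finset.univ.filter (fun i => c i ≠ 0) := by
      simp only [Finset.mem_filter, Finset.mem_univ, true_and]; exact hi
    have := Finset.card_pos.mpr ⟨i, hmem⟩
    omega
  | succ m ih =>
    intro c hc hcard hrel
    obtain ⟨j, hj⟩ : ∃ j, c j ≠ 0 := by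
      by_contra hall
      push_neg at hall
      exact hc (funext fun i => hall i)
    set c' : ι → K := fun i => (c j)⁻¹ * c i with hc'
    have hc'j : c' j = 1 := inv_mul_cancel₀ hj
    have hrel' : ∀ k < m + 1, ∑ i, c' i * D^[k] (u i) = 0 := by
      intro k hk
      have := hrel k hk
      calc ∑ i, c' i * D^[k] (u i) = (c j)⁻¹ * ∑ i, c i * D^[k] (u i) := by
            rw [Finset.mul_sum]; exact Finset.sum_congr rfl fun i _ => by ring
        _ = 0 := by rw [this, mul_zero]
    set e : ι → K := fun i => D (c' i) with he
    by_cases he0 : e = 0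
    · refine ⟨c', ?_, ?_, ?_⟩
      · intro h0
        have : c' j = 0 := congrFun h0 j
        rw [hc'j] at this; exact one_ne_zero this
      · intro i; exact congrFun he0 i
      · have := hrel' 0 (Nat.succ_pos m)
        simpa using this
    · have hej : e j = 0 := by
        show D (c' j) = 0
        rw [hc'j]; exact hD1
      have hsub : Finset.univ.filter (fun i => e i ≠ 0) ⊆
          (Finset.univ.filter (fun i => c i ≠ 0)).erase j := by
        intro i hi
        simp only [Finset.mem_filter, Finset.mem_univ, true_and] at hi
        refine Finset.mem_erase.mpr ⟨?_, ?_⟩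
        · rintro rfl; exact hi hej
        · simp only [Finset.mem_filter, Finset.mem_univ, true_and]
          intro hci
          apply hi
          show D ((c j)⁻¹ * c i) = 0
          rw [hci, mul_zero]; exact hD0
      have hjmem : j ∈ Finset.univ.filter (fun i => c i ≠ 0) := by
        simp only [Finset.mem_filter, Finset.mem_univ, true_and]; exact hj
      have hcard' : (Finset.univ.filter (fun i => e i ≠ 0)).card ≤ m := by
        have h1 := Finset.card_le_card hsub
        have h2 := Finset.card_erase_of_mem hjmem
        omega
      have herel : ∀ k < m, ∑ i, e i * D^[k] (u i) = 0 := by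
        intro k hk
        have hDsum : D (∑ i, c' i * D^[k] (u i)) = 0 := by
          rw [hrel' k (by omega)]; exact hD0
        have hsplit : D (∑ i, c' i * D^[k] (u i))
            = ∑ i, (c' i * D^[k+1] (u i) + e i * D^[k] (u i)) := by
          let Dh : K →+ K := AddMonoidHom.mk' D hadd
          show Dh (∑ i, c' i * D^[k] (u i)) = _
          rw [map_sum]
          refine Finset.sum_congr rfl fun i _ => ?_
          show D (c' i * D^[k] (u i)) = _
          rw [hleib]
          rw [Function.iterate_succ_apply']
        rw [hsplit, Finset.sum_add_distrib, hrel' (k+1) (by omega), zero_add] at hDsum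
        exact hDsum
      exact ih e he0 hcard' herel

set_option synthInstance.maxHeartbeats 1000000 in
/-- Two `n`-th order linear differential operators annihilating `n` solutions
which are linearly independent over the constants differ by a common factor `Θ`. -/
theorem operators_differ_by_common_factor
    {K : Type*} [Field K] [CharZero K] (D : K → K)
    (hadd : ∀ a b : K, D (a + b) = D a + D b)
    (hleib : ∀ a b : K, D (a * b) = a * D b + D a * b)
    (C : Subfield K) (hC : ∀ x : K, x ∈ C ↔ D x = 0)
    {n : ℕ} (u : Fin n → K) (hli : LinearIndependent C u)
    (h g : Fin (n + 1) → K) (hne : ∃ k, h k ≠ 0)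
    (hh : ∀ i, ∑ k : Fin (n + 1), h k * (D^[(k : ℕ)] (u i)) = 0)
    (hg : ∀ i, ∑ k : Fin (n + 1), g k * (D^[(k : ℕ)] (u i)) = 0) :
    ∃ Θ : K, ∀ k, g k = Θ * h k := by
  classical
  set M : Matrix (Fin n) (Fin (n + 1)) K := fun i k => D^[(k : ℕ)] (u i) with hM
  have hrows : LinearIndependent K M := by
    rw [Fintype.linearIndependent_iff]
    intro c hsum
    by_contra hcne
    push_neg at hcne
    obtain ⟨i₀, hi₀⟩ := hcne
    have hcne' : c ≠ 0 := fun h0 => hi₀ (congrFun h0 i₀)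
    have hrel : ∀ k < n + 1, ∑ i, c i * D^[k] (u i) = 0 := by
      intro k hk
      have := congrFun hsum ⟨k, hk⟩
      simpa [M] using this
    have hcard : (Finset.univ.filter (fun i => c i ≠ 0)).card ≤ n + 1 := by
      calc (Finset.univ.filter (fun i => c i ≠ 0)).card ≤ Finset.univ.card :=
            Finset.card_le_card (Finset.filter_subset _ _)
        _ = n := by simp
        _ ≤ n + 1 := Nat.le_succ n
    obtain ⟨d, hd0, hdc, hdsum⟩ := wronskian_key D hadd hleib u (n + 1) c hcne' hcard hrel
    have hli' := Fintype.linearIndependent_iff.mp hli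
    have hz : ∀ i, (⟨d i, (hC (d i)).mpr (hdc i)⟩ : C) = 0 := by
      apply hli'
      show ∑ i, d i * u i = 0
      exact hdsum
    apply hd0
    funext i
    exact congrArg Subtype.val (hz i)
  have hrank : M.rank = n := by
    rw [hrows.rank_matrix, Fintype.card_fin]
  have hrn := LinearMap.finrank_range_add_finrank_ker M.mulVecLin
  rw [Module.finrank_fintype_fun_eq_card, Fintype.card_fin] at hrn
  have hkerdim : Module.finrank K (LinearMap.ker M.mulVecLin) = 1 := by
    have : Module.finrank K (LinearMap.range M.mulVecLin) = n := hrank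
    omega
  have hmem : ∀ a : Fin (n + 1) → K,
      (∀ i, ∑ k : Fin (n + 1), a k * D^[(k : ℕ)] (u i) = 0) →
      a ∈ LinearMap.ker M.mulVecLin := by
    intro a ha
    rw [LinearMap.mem_ker]
    funext i
    simp only [Matrix.mulVecLin_apply, Matrix.mulVec, dotProduct, Pi.zero_apply, M]
    rw [← ha i]
    exact (Finset.sum_congr rfl fun k _ => mul_comm _ _ :
      ∑ k : Fin (n + 1), D^[(k : ℕ)] (u i) * a k = ∑ k : Fin (n + 1), a k * D^[(k : ℕ)] (u i))
  obtain ⟨k₀, hk₀⟩ := hne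
  have hne' : h ≠ 0 := fun h0 => hk₀ (congrFun h0 k₀)
  have hspan : (Submodule.span K {h}) = LinearMap.ker M.mulVecLin := by
    apply Submodule.eq_of_le_of_finrank_le
    · rw [Submodule.span_le, Set.singleton_subset_iff]
      exact hmem h hh
    · rw [hkerdim, finrank_span_singleton hne']
  have hgmem : g ∈ Submodule.span K {h} := by
    rw [hspan]; exact hmem g hg
  obtain ⟨Θ, hΘ⟩ := Submodule.mem_span_singleton.mp hgmem
  exact ⟨Θ, fun k => by rw [← hΘ]; rfl⟩
end

section
/- Let K be a field of characteristic zero with a derivation D. Suppose t, u, w ∈ K satisfy t ≠ 0, u ≠ 0, D t = 1, D u = u, and D w = t⁻¹. Then every differential subfield F of K that contains both u + w and u·w also contains t, u, and w. -/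
/-- abstracting Example 1.1: with `t = x`, `u = eˣ`, `w = ln x`, any
differential subfield containing `u + w` and `u·w` also contains `t`, `u`, and `w`. -/
theorem differential_subfield_contains_generators
    {K : Type*} [Field K] [CharZero K] (D : K → K)
    (hadd : ∀ a b : K, D (a + b) = D a + D b)
    (hleib : ∀ a b : K, D (a * b) = a * D b + D a * b)
    (t u w : K) (ht : t ≠ 0) (hu : u ≠ 0)
    (hDt : D t = 1) (hDu : D u = u) (hDw : D w = t⁻¹) :
    ∀ F : Subfield K, (∀ a ∈ F, D a ∈ F) →
      u + w ∈ F → u * w ∈ F → t ∈ F ∧ u ∈ F ∧ w ∈ F := by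
  intro F hDF hs hp
  -- D 1 = 0
  have hD1 : D 1 = 0 := by
    have h := hleib 1 1
    rw [one_mul] at h
    linear_combination -h
  -- D (t⁻¹) = -(t⁻¹ * t⁻¹)
  have hDti : D t⁻¹ = -(t⁻¹ * t⁻¹) := by
    have h := hleib t t⁻¹
    rw [mul_inv_cancel₀ ht, hD1, hDt, one_mul] at h
    have ht' : t * D t⁻¹ = -t⁻¹ := by linear_combination -h
    have h2 : t⁻¹ * (t * D t⁻¹) = t⁻¹ * (-t⁻¹) := by rw [ht']
    rw [← mul_assoc, inv_mul_cancel₀ ht, one_mul] at h2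
    linear_combination h2
  -- u * t⁻¹ ∈ F
  have hDp : D (u * w) = u * t⁻¹ + u * w := by
    rw [hleib, hDu, hDw]
  have hm : u * t⁻¹ ∈ F := by
    have h1 := hDF _ hp
    rw [hDp] at h1
    have := F.sub_mem h1 hp
    simpa using this
  -- D (u * t⁻¹) = u * t⁻¹ - u * (t⁻¹ * t⁻¹)
  have hDm : D (u * t⁻¹) = u * t⁻¹ - u * (t⁻¹ * t⁻¹) := by
    rw [hleib, hDu, hDti]; ring
  have hm2 : u * (t⁻¹ * t⁻¹) ∈ F := by
    have h1 := hDF _ hm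
    rw [hDm] at h1
    have := F.sub_mem hm h1
    simpa using this
  have htF : t ∈ F := by
    have hdiv := F.div_mem hm hm2
    have heq : (u * t⁻¹) / (u * (t⁻¹ * t⁻¹)) = t := by
      field_simp
    rwa [heq] at hdiv
  have huF : u ∈ F := by
    have := F.mul_mem hm htF
    rwa [inv_mul_cancel_right₀ ht] at this
  exact ⟨htF, huF, by simpa using F.sub_mem hs huF⟩
end

section
/- Let K be a field of characteristic 3 with a derivation D. Let x, z ∈ K satisfy D x = 1 and z³ + x·z − 1 = 0. Then z ≠ 0, and for every integer n one has x·D(zⁿ) + n·zⁿ = 0, where zⁿ denotes the integer power of z in K. -/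
/-- Example 1.5: `x·D + n` annihilates `zⁿ` for every integer `n`, where
`z` is a root of `t³ + x·t − 1` in a differential field of characteristic 3. -/
theorem char_three_resolvent_integer_powers
    {K : Type*} [Field K] [CharP K 3] (D : K → K)
    (hadd : ∀ a b : K, D (a + b) = D a + D b)
    (hleib : ∀ a b : K, D (a * b) = a * D b + D a * b)
    (x z : K) (hx : D x = 1) (hz : z ^ 3 + x * z - 1 = 0) :
    z ≠ 0 ∧ ∀ n : ℤ, x * D (z ^ n) + (n : K) * z ^ n = 0 := by
  have hz0 : z ≠ 0 := by
    rintro rfl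
    simp at hz
  have h3 : (3 : K) = 0 := by exact_mod_cast CharP.cast_eq_zero K 3
  have hD1 : D 1 = 0 := by
    have h := hleib 1 1
    simp only [one_mul, mul_one] at h
    linear_combination -h
  have hDz3 : D (z ^ 3) = 0 := by
    rw [show z ^ 3 = z * z * z from by ring, hleib (z*z) z, hleib z z]
    linear_combination (z * z * D z) * h3
  have hkey : x * D z + z = 0 := by
    have h1 : z ^ 3 + x * z = 1 := by linear_combination hz
    have h2 := congrArg D h1
    rw [hadd, hleib, hDz3, hx, hD1] at h2
    linear_combination h2
  have hnat : ∀ n : ℕ, x * D (z ^ n) + (n : K) * z ^ n = 0 := by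
    intro n
    induction n with
    | zero => simp [hD1]
    | succ n ih =>
      rw [pow_succ, hleib]
      push_cast
      linear_combination z ^ n * hkey + z * ih
  refine ⟨hz0, fun n => ?_⟩
  rcases n.eq_nat_or_neg with ⟨m, rfl | rfl⟩
  · rw [zpow_natCast]
    exact_mod_cast hnat m
  · have hw : z ^ m ≠ 0 := pow_ne_zero m hz0
    have hinv : D ((z ^ m)⁻¹) = -(D (z ^ m)) * (z ^ m)⁻¹ * (z ^ m)⁻¹ := by
      have h := hleib (z ^ m) (z ^ m)⁻¹
      rw [mul_inv_cancel₀ hw, hD1] at h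
      field_simp at h ⊢
      linear_combination -h
    rw [zpow_neg, zpow_natCast, hinv]
    push_cast
    have hm := hnat m
    field_simp
    linear_combination (-1 : K) * hm
end

section
/- Let m be a natural number with m ≥ 2. Let z : ℝ → ℝ be differentiable with z(x) > 0 for every x ∈ ℝ, and let f₁, f₂, f₃ : ℝ → ℝ. Suppose that for every α ∈ ℝ and every x ∈ ℝ, f₁(x) · deriv (t ↦ z(t)^α) x + (f₂(x) + f₃(x)·α^m) · z(x)^α = 0, where z(t)^α is the real power. Then for every x ∈ ℝ one has f₁(x)·(deriv z x) = 0, f₂(x) = 0, and f₃(x) = 0; in particular, if f₁ vanishes nowhere then deriv z x = 0 for all x. -/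
/-- Example 1.6: no α-resolvent of the form
`f₁·D z^α + (f₂ + f₃·α^m)·z^α = 0` exists with `m ≥ 2` unless the coefficients vanish;
in particular if `f₁` vanishes nowhere then `z` is constant. -/
theorem no_resolvent_with_alpha_power
    (m : ℕ) (hm : 2 ≤ m)
    (z : ℝ → ℝ) (hz : Differentiable ℝ z) (hzpos : ∀ x : ℝ, 0 < z x)
    (f₁ f₂ f₃ : ℝ → ℝ)
    (h : ∀ α x : ℝ,
      f₁ x * deriv (fun t : ℝ => z t ^ α) x + (f₂ x + f₃ x * α ^ m) * z x ^ α = 0) :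
    (∀ x : ℝ, f₁ x * deriv z x = 0 ∧ f₂ x = 0 ∧ f₃ x = 0) ∧
    ((∀ x : ℝ, f₁ x ≠ 0) → ∀ x : ℝ, deriv z x = 0) := by
  have key : ∀ x : ℝ, f₁ x * deriv z x = 0 ∧ f₂ x = 0 ∧ f₃ x = 0 := by
    intro x
    have hd : ∀ α : ℝ, deriv (fun t : ℝ => z t ^ α) x
        = deriv z x * α * z x ^ (α - 1) := by
      intro α
      exact (((hz x).hasDerivAt).rpow_const (Or.inl (hzpos x).ne')).deriv
    have hzx := hzpos x
    have h0 := h 0 x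
    have h1 := h 1 x
    have h2 := h 2 x
    rw [hd] at h0 h1 h2
    have hm0 : m ≠ 0 := by omega
    simp only [zero_pow hm0, one_pow, sub_self, Real.rpow_zero, Real.rpow_one,
      mul_zero, zero_mul, mul_one, add_zero] at h0 h1
    have h21 : (2:ℝ) - 1 = 1 := by norm_num
    rw [h21, Real.rpow_one] at h2
    have h2' : z x ^ (2:ℝ) = z x * z x := by
      rw [show (2:ℝ) = ((2:ℕ):ℝ) by norm_num, Real.rpow_natCast]; ring
    rw [h2'] at h2
    -- h0 : f₁ x * (deriv z x * 0 * z x ^ (0-1)) + (f₂ x + f₃ x * 0) * 1 = 0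
    have hf2 : f₂ x = 0 := by
      have := h0
      nlinarith [this]
    have h1' : f₁ x * deriv z x + f₃ x * z x = 0 := by nlinarith [h1, hf2]
    have h2'' : 2 * (f₁ x * deriv z x) * z x + f₃ x * (2:ℝ)^m * (z x * z x) = 0 := by
      nlinarith [h2, hf2]
    have hpow : (4:ℝ) ≤ (2:ℝ)^m := by
      calc (4:ℝ) = 2^2 := by norm_num
      _ ≤ 2^m := pow_le_pow_right₀ (by norm_num) hm
    have hf3 : f₃ x = 0 := by
      have hq : f₃ x * ((2:ℝ)^m - 2) * (z x * z x) = 0 := by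
        nlinarith [h1', h2'']
      have hne : ((2:ℝ)^m - 2) * (z x * z x) ≠ 0 :=
        mul_ne_zero (by linarith) (by positivity)
      by_contra hc
      have : f₃ x * (((2:ℝ)^m - 2) * (z x * z x)) ≠ 0 := mul_ne_zero hc hne
      apply this; linarith [hq, mul_assoc (f₃ x) ((2:ℝ)^m - 2) (z x * z x)]
    have hf1 : f₁ x * deriv z x = 0 := by nlinarith [h1', hf3]
    exact ⟨hf1, hf2, hf3⟩
  refine ⟨key, fun hne x => ?_⟩
  have := (key x).1
  exact (mul_eq_zero.mp this).resolve_left (hne x)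
end

section
/- For all real numbers α, β and every real x > 0, let y : ℝ → ℝ be the function y(t) = t^α + (t+1)^β (real powers). Then ((α−β)·x + α) · x · (x+1) · (iteratedDeriv 2 y) x + ((α − α² − β + β²)·x² + (α − α²)·(2x+1)) · (deriv y) x + ((α−β)·x + (α−1)) · α · β · y(x) = 0. -/
lemma y_hasDeriv (α β : ℝ) (t : ℝ) (ht : 0 < t) :
    HasDerivAt (fun s : ℝ => s ^ α + (s + 1) ^ β)
      (α * t ^ (α - 1) + β * (t + 1) ^ (β - 1)) t := by
  have h1 : HasDerivAt (fun s : ℝ => s ^ α) (α * t ^ (α - 1)) t := by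
    have := Real.hasDerivAt_rpow_const (x := t) (p := α) (Or.inl ht.ne')
    simpa using this
  have h2 : HasDerivAt (fun s : ℝ => (s + 1) ^ β) (β * (t + 1) ^ (β - 1)) t := by
    have hb : HasDerivAt (fun s : ℝ => s + 1) 1 t := (hasDerivAt_id t).add_const 1
    have ha := Real.hasDerivAt_rpow_const (x := t + 1) (p := β)
      (Or.inl (by linarith : t + 1 ≠ 0))
    simpa [Function.comp_def] using ha.comp t hb
  exact h1.add h2

/-- Example 6.1, equation (6.7): the explicit joint second-order
differential resolvent for `y(t) = t^α + (t+1)^β`. -/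
theorem joint_resolvent_explicit
    (α β : ℝ) (x : ℝ) (hx : 0 < x)
    (y : ℝ → ℝ) (hy : y = fun t : ℝ => t ^ α + (t + 1) ^ β) :
    ((α - β) * x + α) * x * (x + 1) * iteratedDeriv 2 y x
      + ((α - α ^ 2 - β + β ^ 2) * x ^ 2 + (α - α ^ 2) * (2 * x + 1)) * deriv y x
      + ((α - β) * x + (α - 1)) * α * β * y x = 0 := by
  subst hy
  have hx1 : (0:ℝ) < x + 1 := by linarith
  have hder : ∀ t ∈ Set.Ioi (0:ℝ), deriv (fun s : ℝ => s ^ α + (s + 1) ^ β) t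
      = α * t ^ (α - 1) + β * (t + 1) ^ (β - 1) := fun t ht =>
    (y_hasDeriv α β t ht).deriv
  have hev : deriv (fun s : ℝ => s ^ α + (s + 1) ^ β)
      =ᶠ[nhds x] fun t => α * t ^ (α - 1) + β * (t + 1) ^ (β - 1) := by
    filter_upwards [isOpen_Ioi.mem_nhds (show x ∈ Set.Ioi (0:ℝ) from hx)] with t ht
    exact hder t ht
  have hd1 : deriv (fun s : ℝ => s ^ α + (s + 1) ^ β) x
      = α * x ^ (α - 1) + β * (x + 1) ^ (β - 1) := hder x hx
  have hd2g : HasDerivAt (fun t : ℝ => α * t ^ (α - 1) + β * (t + 1) ^ (β - 1))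
      (α * ((α - 1) * x ^ (α - 2)) + β * ((β - 1) * (x + 1) ^ (β - 2))) x := by
    have h1 : HasDerivAt (fun t : ℝ => α * t ^ (α - 1)) (α * ((α - 1) * x ^ (α - 2))) x := by
      have := (Real.hasDerivAt_rpow_const (x := x) (p := α - 1) (Or.inl hx.ne')).const_mul α
      simpa [show α - 1 - 1 = α - 2 by ring] using this
    have h2 : HasDerivAt (fun t : ℝ => β * (t + 1) ^ (β - 1))
        (β * ((β - 1) * (x + 1) ^ (β - 2))) x := by
      have hb : HasDerivAt (fun s : ℝ => s + 1) 1 x := (hasDerivAt_id x).add_const 1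
      have ha := Real.hasDerivAt_rpow_const (x := x + 1) (p := β - 1) (Or.inl hx1.ne')
      have := (ha.comp x hb).const_mul β
      simpa [show β - 1 - 1 = β - 2 by ring] using this
    exact h1.add h2
  have hd2 : iteratedDeriv 2 (fun s : ℝ => s ^ α + (s + 1) ^ β) x
      = α * (α - 1) * x ^ (α - 2) + β * (β - 1) * (x + 1) ^ (β - 2) := by
    rw [iteratedDeriv_succ, iteratedDeriv_one, hev.deriv_eq, hd2g.deriv]
    ring_nf
  -- algebra
  have e1 : x ^ (α - 1) = x ^ (α - 2) * x := by
    rw [show α - 1 = (α - 2) + 1 by ring, Real.rpow_add hx, Real.rpow_one]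
  have e2 : x ^ α = x ^ (α - 2) * x ^ 2 := by
    rw [show α = (α - 2) + 2 by ring, Real.rpow_add hx]
    norm_num [Real.rpow_natCast]
  have f1 : (x + 1) ^ (β - 1) = (x + 1) ^ (β - 2) * (x + 1) := by
    rw [show β - 1 = (β - 2) + 1 by ring, Real.rpow_add hx1, Real.rpow_one]
  have f2 : (x + 1) ^ β = (x + 1) ^ (β - 2) * (x + 1) ^ 2 := by
    rw [show β = (β - 2) + 2 by ring, Real.rpow_add hx1]
    norm_num [Real.rpow_natCast]
  rw [hd2, hd1]
  simp only [e1, e2, f1, f2]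
  ring
end

section
/- There exist five polynomials P₂, Q₁, R₁, Q₀, R₀ in three variables with rational coefficients, not all the zero polynomial, such that for every α ∈ ℝ, every x > 1, and each of the two functions y₁(t) = exp(α·t) and y₂(t) = (log t)^α (real power), one has P₂(x, eˣ, log x) · (iteratedDeriv 2 y) x + (Q₁(x, eˣ, log x) + R₁(x, eˣ, log x)·α) · (deriv y) x + (Q₀(x, eˣ, log x)·α + R₀(x, eˣ, log x)·α²) · y(x) = 0 for y = y₁ and for y = y₂. -/
/-- Example 1.2: the quadratic with roots `eˣ` and `ln x` admits a
second-order differential α-resolvent whose coefficient-functions are rational-coefficient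
polynomials in `x`, `eˣ`, `ln x`, independent of `α`. -/
theorem second_order_alpha_resolvent_exists :
    ∃ P₂ Q₁ R₁ Q₀ R₀ : MvPolynomial (Fin 3) ℚ,
      ¬(P₂ = 0 ∧ Q₁ = 0 ∧ R₁ = 0 ∧ Q₀ = 0 ∧ R₀ = 0) ∧
      ∀ (α x : ℝ), 1 < x →
        ∀ y : ℝ → ℝ,
          (y = fun t : ℝ => Real.exp (α * t)) ∨ (y = fun t : ℝ => Real.log t ^ α) →
          (MvPolynomial.aeval ![x, Real.exp x, Real.log x]) P₂ * iteratedDeriv 2 y x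
          + ((MvPolynomial.aeval ![x, Real.exp x, Real.log x]) Q₁
              + (MvPolynomial.aeval ![x, Real.exp x, Real.log x]) R₁ * α) * deriv y x
          + ((MvPolynomial.aeval ![x, Real.exp x, Real.log x]) Q₀ * α
              + (MvPolynomial.aeval ![x, Real.exp x, Real.log x]) R₀ * α ^ 2) * y x
          = 0 := by
  refine ⟨MvPolynomial.X 0 * MvPolynomial.X 2 * (MvPolynomial.X 0 * MvPolynomial.X 2 - 1),
    -(1 + MvPolynomial.X 2),
    1 - (MvPolynomial.X 0 * MvPolynomial.X 2) ^ 2,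
    1 + MvPolynomial.X 2,
    MvPolynomial.X 0 * MvPolynomial.X 2 - 1, ?_, ?_⟩
  · rintro ⟨-, -, -, h, -⟩
    have := congrArg (MvPolynomial.eval (fun _ => (0 : ℚ))) h
    simp at this
  · intro α x hx y hy
    have hx0 : (0 : ℝ) < x := lt_trans one_pos hx
    have hL : 0 < Real.log x := Real.log_pos hx
    simp only [map_sub, map_add, map_mul, map_one, map_pow, map_neg, MvPolynomial.aeval_X,
      Matrix.cons_val_zero, Matrix.cons_val_one, Matrix.head_cons, Matrix.cons_val_two,
      Matrix.tail_cons]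
    rcases hy with rfl | rfl
    · -- y = exp (α t)
      have hD : ∀ t : ℝ, HasDerivAt (fun s : ℝ => Real.exp (α * s)) (α * Real.exp (α * t)) t := by
        intro t
        simpa [mul_comm] using ((hasDerivAt_id t).const_mul α).exp
      have hd1 : deriv (fun s : ℝ => Real.exp (α * s)) = fun t => α * Real.exp (α * t) :=
        funext fun t => (hD t).deriv
      have hd2 : iteratedDeriv 2 (fun s : ℝ => Real.exp (α * s)) x
          = α * (α * Real.exp (α * x)) := by
        rw [iteratedDeriv_succ, iteratedDeriv_one, hd1]
        exact (((hD x).const_mul α)).deriv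
      rw [hd2, hd1]
      ring
    · -- y = (log t) ^ α
      have hD : ∀ t : ℝ, 1 < t →
          HasDerivAt (fun s : ℝ => Real.log s ^ α)
            (α * Real.log t ^ (α - 1) * t⁻¹) t := by
        intro t ht
        have h := (Real.hasDerivAt_log (show t ≠ 0 by positivity)).rpow_const
          (p := α) (Or.inl (Real.log_pos ht).ne')
        convert h using 1
        ring
      have hd1 : deriv (fun s : ℝ => Real.log s ^ α) x = α * Real.log x ^ (α - 1) * x⁻¹ :=
        (hD x hx).deriv
      have heq : deriv (fun s : ℝ => Real.log s ^ α)
          =ᶠ[nhds x] fun t => α * (Real.log t ^ (α - 1) * t⁻¹) := by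
        filter_upwards [Ioi_mem_nhds hx] with t ht
        rw [(hD t ht).deriv]; ring
      have hD2 : HasDerivAt (fun t : ℝ => α * (Real.log t ^ (α - 1) * t⁻¹))
          (α * (((α - 1) * Real.log x ^ (α - 1 - 1) * x⁻¹) * x⁻¹
            + Real.log x ^ (α - 1) * (-(x ^ 2)⁻¹))) x := by
        have h := (((Real.hasDerivAt_log hx0.ne').rpow_const
          (p := α - 1) (Or.inl hL.ne')).mul (hasDerivAt_inv hx0.ne')).const_mul α
        refine h.congr_deriv ?_
        ring
      have hd2 : iteratedDeriv 2 (fun s : ℝ => Real.log s ^ α) x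
          = α * (((α - 1) * Real.log x ^ (α - 1 - 1) * x⁻¹) * x⁻¹
            + Real.log x ^ (α - 1) * (-(x ^ 2)⁻¹)) := by
        rw [iteratedDeriv_succ, iteratedDeriv_one, heq.deriv_eq]
        exact hD2.deriv
      rw [hd2, hd1]
      have e1 : Real.log x ^ α = Real.log x ^ (α - 2) * Real.log x * Real.log x := by
        calc Real.log x ^ α = Real.log x ^ ((α - 2) + 1 + 1) := by congr 1; ring
          _ = _ := by rw [Real.rpow_add hL, Real.rpow_add hL, Real.rpow_one]
      have e2 : Real.log x ^ (α - 1) = Real.log x ^ (α - 2) * Real.log x := by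
        calc Real.log x ^ (α - 1) = Real.log x ^ ((α - 2) + 1) := by congr 1; ring
          _ = _ := by rw [Real.rpow_add hL, Real.rpow_one]
      have e3 : α - 1 - 1 = α - 2 := by ring
      have hb : (fun t : ℝ => Real.log t ^ α) x = Real.log x ^ α := rfl
      rw [hb, e3, e1, e2]
      field_simp
      ring
end
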